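/- Given an exact sequence of inverse systems of abelian groups over ℕ, 0 → (A_n) → (B_n) → (C_n) → 0 (exact at each level, with compatible bonding maps), there is a six-term exact sequence 0 → lim A_n → lim B_n → lim C_n → lim¹ A_n → lim¹ B_n → lim¹ C_n → 0. -/
import Mathlib


/-- The inverse limit of an inverse system of abelian groups over `ℕ`, as a subgroup
of the product. -/
def InvLim (G : ℕ → Type) [∀ n, AddCommGroup (G n)] (f : ∀ n, G (n + 1) →+ G n) :
    AddSubgroup (∀ n, G n) where
  carrier := {g | ∀ n, f n (g (n + 1)) = g n}
  add_mem' {g} {h} hg hh := fun n => by simp [map_add, hg n, hh n]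
  zero_mem' := fun n => by simp
  neg_mem' {g} hg := fun n => by simp [hg n]

/-- The shifted-difference map `(g_n) ↦ (g_n - f_n (g_{n+1}))` whose kernel is `lim`
and whose cokernel is `lim¹`. -/
def limD (G : ℕ → Type) [∀ n, AddCommGroup (G n)] (f : ∀ n, G (n + 1) →+ G n) :
    (∀ n, G n) →+ (∀ n, G n) :=
  AddMonoidHom.mk' (fun g n => g n - f n (g (n + 1))) (by
    intro g h
    funext n
    simp [map_add]
    abel)

/-- `lim¹` of an inverse system of abelian groups over `ℕ`: the cokernel of the
shifted-difference map. -/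
abbrev InvLim1 (G : ℕ → Type) [∀ n, AddCommGroup (G n)] (f : ∀ n, G (n + 1) →+ G n) :=
  (∀ n, G n) ⧸ (limD G f).range


lemma limD_apply (G : ℕ → Type) [∀ n, AddCommGroup (G n)] (f : ∀ n, G (n + 1) →+ G n)
    (g : ∀ n, G n) (n : ℕ) : limD G f g n = g n - f n (g (n + 1)) := rfl

/-- Given a levelwise short exact sequence of inverse systems of abelian groups
over `ℕ` (with compatible bonding maps), there is a six-term exact sequence
`0 → lim A → lim B → lim C → lim¹ A → lim¹ B → lim¹ C → 0`, where the maps between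
the `lim`s and the `lim¹`s are the ones induced by the levelwise maps. -/
theorem stmt_12 (A B C : ℕ → Type)
    [∀ n, AddCommGroup (A n)] [∀ n, AddCommGroup (B n)] [∀ n, AddCommGroup (C n)]
    (a : ∀ n, A (n + 1) →+ A n) (b : ∀ n, B (n + 1) →+ B n) (c : ∀ n, C (n + 1) →+ C n)
    (i : ∀ n, A n →+ B n) (p : ∀ n, B n →+ C n)
    (hia : ∀ n x, i n (a n x) = b n (i (n + 1) x))
    (hpb : ∀ n x, p n (b n x) = c n (p (n + 1) x))
    (hinj : ∀ n, Function.Injective (i n))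
    (hsurj : ∀ n, Function.Surjective (p n))
    (hexact : ∀ n, Function.Exact (i n) (p n)) :
    ∃ (F1 : InvLim A a →+ InvLim B b) (F2 : InvLim B b →+ InvLim C c)
      (F3 : InvLim C c →+ InvLim1 A a) (F4 : InvLim1 A a →+ InvLim1 B b)
      (F5 : InvLim1 B b →+ InvLim1 C c),
      (∀ g n, ((F1 g : ∀ n, B n) n) = i n ((g : ∀ n, A n) n)) ∧
      (∀ g n, ((F2 g : ∀ n, C n) n) = p n ((g : ∀ n, B n) n)) ∧
      (∀ x : ∀ n, A n,
        F4 (QuotientAddGroup.mk x) = QuotientAddGroup.mk (fun n => i n (x n))) ∧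
      (∀ x : ∀ n, B n,
        F5 (QuotientAddGroup.mk x) = QuotientAddGroup.mk (fun n => p n (x n))) ∧
      Function.Injective F1 ∧
      Function.Exact F1 F2 ∧ Function.Exact F2 F3 ∧ Function.Exact F3 F4 ∧
      Function.Exact F4 F5 ∧
      Function.Surjective F5 := by
  classical
  choose sec hsec using hsurj
  have hker : ∀ n (y : B n), p n y = 0 → ∃ x, i n x = y := fun n y h => ((hexact n) y).mp h
  choose pre hpre using fun n (y : B n) (h : p n y = 0) => ((hexact n) y).mp h
  have hpi0 : ∀ n (x : A n), p n (i n x) = 0 := fun n x => (hexact n).apply_apply_eq_zero x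
  let iH : (∀ n, A n) →+ (∀ n, B n) :=
    AddMonoidHom.mk' (fun x n => i n (x n)) (fun x y => funext fun n => map_add (i n) _ _)
  let pH : (∀ n, B n) →+ (∀ n, C n) :=
    AddMonoidHom.mk' (fun x n => p n (x n)) (fun x y => funext fun n => map_add (p n) _ _)
  have hiHcomm : ∀ x, limD B b (iH x) = iH (limD A a x) := by
    intro x; funext n
    show i n (x n) - b n (i (n + 1) (x (n + 1))) = i n (x n - a n (x (n + 1)))
    rw [map_sub, hia]
  have hpHcomm : ∀ x, limD C c (pH x) = pH (limD B b x) := by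
    intro x; funext n
    show p n (x n) - c n (p (n + 1) (x (n + 1))) = p n (x n - b n (x (n + 1)))
    rw [map_sub, hpb]
  have hle1 : (limD A a).range ≤ AddSubgroup.comap iH (limD B b).range := by
    rintro _ ⟨y, rfl⟩
    exact ⟨iH y, hiHcomm y⟩
  have hle2 : (limD B b).range ≤ AddSubgroup.comap pH (limD C c).range := by
    rintro _ ⟨y, rfl⟩
    exact ⟨pH y, hpHcomm y⟩
  let F1 : InvLim A a →+ InvLim B b :=
    AddMonoidHom.mk'
      (fun g => ⟨fun n => i n (g.1 n), by
        intro n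
        rw [← hia n]
        exact congrArg (i n) (g.2 n)⟩)
      (fun g h => Subtype.ext (funext fun n => map_add (i n) _ _))
  let F2 : InvLim B b →+ InvLim C c :=
    AddMonoidHom.mk'
      (fun g => ⟨fun n => p n (g.1 n), by
        intro n
        rw [← hpb n]
        exact congrArg (p n) (g.2 n)⟩)
      (fun g h => Subtype.ext (funext fun n => map_add (p n) _ _))
  let F4 : InvLim1 A a →+ InvLim1 B b := QuotientAddGroup.map _ _ iH hle1
  let F5 : InvLim1 B b →+ InvLim1 C c := QuotientAddGroup.map _ _ pH hle2
  have hF4mk : ∀ x : ∀ n, A n,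
      F4 (QuotientAddGroup.mk x) = QuotientAddGroup.mk (fun n => i n (x n)) :=
    fun x => QuotientAddGroup.map_mk _ _ _ _ x
  have hF5mk : ∀ x : ∀ n, B n,
      F5 (QuotientAddGroup.mk x) = QuotientAddGroup.mk (fun n => p n (x n)) :=
    fun x => QuotientAddGroup.map_mk _ _ _ _ x
  -- the connecting map
  have hpz : ∀ (cc : InvLim C c) (n : ℕ),
      p n (limD B b (fun m => sec m (cc.1 m)) n) = 0 := by
    intro cc n
    show p n (sec n (cc.1 n) - b n (sec (n + 1) (cc.1 (n + 1)))) = 0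
    rw [map_sub, hsec, hpb, hsec, cc.2 n, sub_self]
  let x0 : InvLim C c → ∀ n, A n := fun cc n => pre n _ (hpz cc n)
  have hx0 : ∀ cc n, i n (x0 cc n) = limD B b (fun m => sec m (cc.1 m)) n :=
    fun cc n => hpre n _ (hpz cc n)
  have key : ∀ (cc : InvLim C c) (g : ∀ n, B n) (x : ∀ n, A n),
      (∀ n, p n (g n) = cc.1 n) → (∀ n, i n (x n) = limD B b g n) →
      (QuotientAddGroup.mk (x0 cc) : InvLim1 A a) = QuotientAddGroup.mk x := by
    intro cc g x hg hx
    have hker2 : ∀ n, p n (g n - sec n (cc.1 n)) = 0 := by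
      intro n; rw [map_sub, hg, hsec, sub_self]
    choose y hy using fun n => hker n _ (hker2 n)

    refine (QuotientAddGroup.eq).mpr ⟨y, ?_⟩
    have hcomp : ∀ n, i n (limD A a y n) = i n ((-(x0 cc) + x) n) := by
      intro n
      have h1 : i n (limD A a y n) = limD B b (fun m => i m (y m)) n := by
        show i n (y n - a n (y (n + 1))) = i n (y n) - b n (i (n + 1) (y (n + 1)))
        rw [map_sub, hia]
      have h2 : (fun m => i m (y m)) = (fun m => g m) - fun m => sec m (cc.1 m) :=
        funext fun m => hy m
      have h3 : limD B b ((fun m => g m) - fun m => sec m (cc.1 m)) n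
          = limD B b g n - limD B b (fun m => sec m (cc.1 m)) n := by
        rw [map_sub (limD B b)]
        rfl
      rw [h1, h2, h3, ← hx n, ← hx0 cc n, ← map_sub (i n)]
      exact congrArg (i n) (by show x n - x0 cc n = -(x0 cc n) + x n; abel)
    have : limD A a y = -(x0 cc) + x := funext fun n => hinj n (hcomp n)
    exact this
  let F3 : InvLim C c →+ InvLim1 A a :=
    AddMonoidHom.mk' (fun cc => QuotientAddGroup.mk (x0 cc))
      (fun cc dd => by
        have h := key (cc + dd)
          ((fun m => sec m (cc.1 m)) + fun m => sec m (dd.1 m)) (x0 cc + x0 dd)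
          (fun n => by
            show p n (sec n (cc.1 n) + sec n (dd.1 n)) = cc.1 n + dd.1 n
            rw [map_add, hsec, hsec])
          (fun n => by
            have hadd := congrFun (map_add (limD B b) (fun m => sec m (cc.1 m))
              (fun m => sec m (dd.1 m))) n
            show i n (x0 cc n + x0 dd n) = _
            rw [map_add, hx0, hx0, hadd]
            rfl)
        show (QuotientAddGroup.mk (x0 (cc + dd)) : InvLim1 A a)
            = QuotientAddGroup.mk (x0 cc) + QuotientAddGroup.mk (x0 dd)
        rw [h]
        rfl)
  refine ⟨F1, F2, F3, F4, F5, fun g n => rfl, fun g n => rfl, hF4mk, hF5mk,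
    ?_, ?_, ?_, ?_, ?_, ?_⟩
  · -- injectivity of F1
    intro g h hgh
    refine Subtype.ext (funext fun n => ?_)
    exact hinj n (congrFun (congrArg Subtype.val hgh) n)
  · -- exact F1 F2
    intro y
    constructor
    · intro hy
      have hy' : ∀ n, p n (y.1 n) = 0 := fun n => congrFun (congrArg Subtype.val hy) n
      refine ⟨⟨fun n => pre n (y.1 n) (hy' n), fun n => ?_⟩, ?_⟩
      · apply hinj n
        rw [hia n, hpre, hpre]
        exact y.2 n
      · exact Subtype.ext (funext fun n => hpre n _ _)
    · rintro ⟨x, rfl⟩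
      exact Subtype.ext (funext fun n => hpi0 n (x.1 n))
  · -- exact F2 F3
    intro cc
    constructor
    · intro hcc
      have hcc' : (QuotientAddGroup.mk (x0 cc) : InvLim1 A a) = 0 := hcc
      obtain ⟨y, hy⟩ := (QuotientAddGroup.eq_zero_iff _).mp hcc'
      refine ⟨⟨fun n => sec n (cc.1 n) - i n (y n), fun n => ?_⟩, ?_⟩
      · rw [map_sub, ← hia n]
        have h1 : b n (sec (n + 1) (cc.1 (n + 1)))
            = sec n (cc.1 n) - i n (x0 cc n) := by
          rw [hx0 cc n]
          show _ = sec n (cc.1 n) - (sec n (cc.1 n) - b n (sec (n + 1) (cc.1 (n + 1))))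
          abel
        rw [h1, ← hy]
        show sec n (cc.1 n) - i n (y n - a n (y (n + 1))) - i n (a n (y (n + 1)))
            = sec n (cc.1 n) - i n (y n)
        rw [map_sub]
        abel
      · refine Subtype.ext (funext fun n => ?_)
        show p n (sec n (cc.1 n) - i n (y n)) = cc.1 n
        rw [map_sub, hsec, hpi0, sub_zero]
    · rintro ⟨yy, rfl⟩
      have h := key (F2 yy) yy.1 0 (fun n => rfl)
        (fun n => by
          show i n 0 = yy.1 n - b n (yy.1 (n + 1))
          rw [map_zero, yy.2 n, sub_self])
      show (QuotientAddGroup.mk (x0 (F2 yy)) : InvLim1 A a) = 0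
      rw [h]
      rfl
  · -- exact F3 F4
    intro q
    constructor
    · intro hq
      obtain ⟨x, rfl⟩ := QuotientAddGroup.mk_surjective q
      have hx' : (QuotientAddGroup.mk (fun n => i n (x n)) : InvLim1 B b) = 0 :=
        (hF4mk x).symm.trans hq
      obtain ⟨g, hg⟩ := (QuotientAddGroup.eq_zero_iff _).mp hx'
      have hgn : ∀ n, g n - b n (g (n + 1)) = i n (x n) := fun n => congrFun hg n
      refine ⟨⟨fun n => p n (g n), fun n => ?_⟩, ?_⟩
      · rw [← hpb n]
        have hb' : b n (g (n + 1)) = g n - i n (x n) := by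
          rw [← hgn n]; abel
        rw [hb', map_sub, hpi0, sub_zero]
      · exact key _ g x (fun n => rfl) (fun n => (hgn n).symm)
    · rintro ⟨cc, rfl⟩
      have : F4 (QuotientAddGroup.mk (x0 cc)) = 0 := by
        rw [hF4mk, QuotientAddGroup.eq_zero_iff]
        exact ⟨fun m => sec m (cc.1 m), funext fun n => (hx0 cc n).symm⟩
      exact this
  · -- exact F4 F5
    intro q
    constructor
    · intro hq
      obtain ⟨y, rfl⟩ := QuotientAddGroup.mk_surjective q
      have h0 : (QuotientAddGroup.mk (fun n => p n (y n)) : InvLim1 C c) = 0 :=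
        (hF5mk y).symm.trans hq
      obtain ⟨z, hz⟩ := (QuotientAddGroup.eq_zero_iff _).mp h0
      have hk : ∀ n, p n (y n - limD B b (fun m => sec m (z m)) n) = 0 := by
        intro n
        have h2 : p n (limD B b (fun m => sec m (z m)) n) = limD C c z n := by
          show p n (sec n (z n) - b n (sec (n + 1) (z (n + 1)))) = z n - c n (z (n + 1))
          rw [map_sub, hsec, hpb, hsec]
        have h3 : limD C c z n = p n (y n) := congrFun hz n
        rw [map_sub, h2, h3, sub_self]
      choose x hx using fun n => hker n _ (hk n)
      refine ⟨QuotientAddGroup.mk x, ?_⟩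
      rw [hF4mk, QuotientAddGroup.eq]
      refine ⟨fun m => sec m (z m), ?_⟩
      funext n
      show limD B b (fun m => sec m (z m)) n = -(i n (x n)) + y n
      rw [hx n]
      abel
    · rintro ⟨q', rfl⟩
      obtain ⟨x, rfl⟩ := QuotientAddGroup.mk_surjective q'
      rw [hF4mk, hF5mk, QuotientAddGroup.eq_zero_iff]
      exact ⟨0, by rw [map_zero]; exact funext fun n => (hpi0 n (x n)).symm⟩
  · -- surjectivity of F5
    intro q
    obtain ⟨z, rfl⟩ := QuotientAddGroup.mk_surjective q
    refine ⟨QuotientAddGroup.mk (fun n => sec n (z n)), ?_⟩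
    rw [hF5mk]
    exact congrArg _ (funext fun n => hsec n (z n))
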